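/- Let $n \ge 1$, $\varsigma > 0$, $\vartheta \in (0,1]$, $\mu \in (1/2, 1)$. For real numbers $g_{i,j}$ ($i \in \{1,\dots,n\}$, $j \ge 0$), let $\Delta_{i,j} = |g_{i,j}|/w_{i,j}$ with $w_{i,j} \ge \sqrt{\vartheta}(\varsigma + \sum_{\ell=0}^j g_{i,\ell}^2)^{\mu}$. Then for all $k$, $\sum_{j=0}^k \Delta_{i,j}^2 \le \frac{\varsigma^{1-2\mu}}{\vartheta(2\mu - 1)}$. -/

import Mathlib

open Real Finset

private lemma bern_step (p : ℝ) (hp : 0 < p) (b c : ℝ) (hb : 0 < b) (hbc : b ≤ c) :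
    p * (c - b) * c ^ (-(p + 1)) ≤ b ^ (-p) - c ^ (-p) := by
  have hc : 0 < c := lt_of_lt_of_le hb hbc
  set s : ℝ := (c - b) / b with hs_def
  have hs : 0 ≤ s := div_nonneg (by linarith) hb.le
  have hcb : c / b = 1 + s := by rw [hs_def, one_add_div hb.ne']; ring
  have hbern : 1 + (p + 1) * s ≤ (1 + s) ^ (p + 1) :=
    one_add_mul_self_le_rpow_one_add (by linarith) (by linarith)
  have hkey : b ^ p * (p * (c - b) + c) ≤ c ^ (p + 1) := by
    have h1 : c ^ (p + 1) = b ^ (p + 1) * (c / b) ^ (p + 1) := by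
      rw [← Real.mul_rpow hb.le (by positivity)]
      rw [mul_div_cancel₀ _ hb.ne']
    have h2 : b ^ (p + 1) = b ^ p * b := by
      rw [Real.rpow_add hb, Real.rpow_one]
    have h3 : b ^ (p + 1) * (1 + (p + 1) * s) ≤ c ^ (p + 1) := by
      rw [h1, hcb]
      exact mul_le_mul_of_nonneg_left hbern (by positivity)
    have h4 : b * (1 + (p + 1) * s) = p * (c - b) + c := by
      have hbs : b * s = c - b := by rw [hs_def]; exact mul_div_cancel₀ _ hb.ne'
      linear_combination (p + 1) * hbs
    calc b ^ p * (p * (c - b) + c) = b ^ (p + 1) * (1 + (p + 1) * s) := by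
          rw [h2, mul_assoc, h4]
      _ ≤ c ^ (p + 1) := h3
  have hB : (0:ℝ) < b ^ p := Real.rpow_pos_of_pos hb p
  have hC : (0:ℝ) < c ^ p := Real.rpow_pos_of_pos hc p
  have hC1 : (0:ℝ) < c ^ (p + 1) := Real.rpow_pos_of_pos hc _
  have hC1eq : c ^ (p + 1) = c ^ p * c := by rw [Real.rpow_add hc, Real.rpow_one]
  rw [Real.rpow_neg hb.le, Real.rpow_neg hc.le, Real.rpow_neg hc.le]
  rw [inv_eq_one_div, inv_eq_one_div, inv_eq_one_div, mul_one_div,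
    div_sub_div _ _ hB.ne' hC.ne', div_le_div_iff₀ hC1 (by positivity)]
  have := mul_le_mul_of_nonneg_right hkey hC.le
  nlinarith [this, hC1eq, hC, hB, hc]

private lemma series_bound (a : ℕ → ℝ) (ha : ∀ j, 0 ≤ a j) (ς p : ℝ) (hς : 0 < ς)
    (hp : 0 < p) (k : ℕ) :
    ∑ j ∈ Finset.range (k + 1),
      a j * (ς + ∑ ℓ ∈ Finset.range (j + 1), a ℓ) ^ (-(p + 1)) ≤ ς ^ (-p) / p := by
  set T : ℕ → ℝ := fun j => ς + ∑ ℓ ∈ Finset.range j, a ℓ with hT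
  have hTpos : ∀ j, 0 < T j := by
    intro j
    have : 0 ≤ ∑ ℓ ∈ Finset.range j, a ℓ := Finset.sum_nonneg fun ℓ _ => ha ℓ
    simp only [hT]; linarith
  have hstep : ∀ j, a j * (T (j + 1)) ^ (-(p + 1)) ≤ (T j ^ (-p) - T (j + 1) ^ (-p)) / p := by
    intro j
    have hmono : T j ≤ T (j + 1) := by
      simp only [hT, Finset.sum_range_succ]; linarith [ha j]
    have hdiff : T (j + 1) - T j = a j := by
      simp only [hT, Finset.sum_range_succ]; ring
    have := bern_step p hp (T j) (T (j + 1)) (hTpos j) hmono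
    rw [hdiff] at this
    rw [le_div_iff₀ hp]
    nlinarith [this]
  calc ∑ j ∈ Finset.range (k + 1), a j * (ς + ∑ ℓ ∈ Finset.range (j + 1), a ℓ) ^ (-(p + 1))
      ≤ ∑ j ∈ Finset.range (k + 1), (T j ^ (-p) - T (j + 1) ^ (-p)) / p :=
        Finset.sum_le_sum fun j _ => hstep j
    _ = (T 0 ^ (-p) - T (k + 1) ^ (-p)) / p := by
        rw [← Finset.sum_div, Finset.sum_range_sub' (fun j => T j ^ (-p))]
    _ ≤ ς ^ (-p) / p := by
        have h0 : T 0 = ς := by simp [hT]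
        have h1 : 0 < T (k + 1) ^ (-p) := Real.rpow_pos_of_pos (hTpos _) _
        rw [h0]
        gcongr
        linarith

theorem stmt_14 (n : ℕ) (hn : 1 ≤ n) (g w Δ : Fin n → ℕ → ℝ)
    (ς ϑ μ : ℝ) (hς : 0 < ς) (hϑ0 : 0 < ϑ) (hϑ1 : ϑ ≤ 1) (hμ0 : 1 / 2 < μ) (hμ1 : μ < 1)
    (hw : ∀ i j, Real.sqrt ϑ * (ς + ∑ ℓ ∈ Finset.range (j + 1), (g i ℓ) ^ 2) ^ μ ≤ w i j)
    (hΔ : ∀ i j, Δ i j = |g i j| / w i j) (i : Fin n) (k : ℕ) :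
    ∑ j ∈ Finset.range (k + 1), (Δ i j) ^ 2 ≤ ς ^ (1 - 2 * μ) / (ϑ * (2 * μ - 1)) := by
  set a : ℕ → ℝ := fun j => (g i j) ^ 2 with ha_def
  have ha : ∀ j, 0 ≤ a j := fun j => sq_nonneg _
  set p : ℝ := 2 * μ - 1 with hp_def
  have hp : 0 < p := by simp only [hp_def]; linarith
  set T : ℕ → ℝ := fun j => ς + ∑ ℓ ∈ Finset.range (j + 1), a ℓ with hT
  have hTpos : ∀ j, 0 < T j := by
    intro j
    have : 0 ≤ ∑ ℓ ∈ Finset.range (j + 1), a ℓ := Finset.sum_nonneg fun ℓ _ => ha ℓ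
    simp only [hT]; linarith
  have hterm : ∀ j, (Δ i j) ^ 2 ≤ (1 / ϑ) * (a j * (T j) ^ (-(p + 1))) := by
    intro j
    have hwpos : 0 < w i j := by
      have := hw i j
      have h1 : 0 < Real.sqrt ϑ * (ς + ∑ ℓ ∈ Finset.range (j + 1), (g i ℓ) ^ 2) ^ μ := by
        apply mul_pos (Real.sqrt_pos.mpr hϑ0)
        exact Real.rpow_pos_of_pos (hTpos j) μ
      linarith
    have hw2 : ϑ * (T j) ^ (p + 1) ≤ (w i j) ^ 2 := by
      have := hw i j
      have hsq : (Real.sqrt ϑ * (T j) ^ μ) ^ 2 ≤ (w i j) ^ 2 := by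
        apply sq_le_sq' _ this
        nlinarith [mul_pos (Real.sqrt_pos.mpr hϑ0) (Real.rpow_pos_of_pos (hTpos j) μ)]
      have e2 : ((T j) ^ μ) ^ 2 = (T j) ^ (p + 1) := by
        rw [← Real.rpow_natCast ((T j) ^ μ) 2, ← Real.rpow_mul (hTpos j).le]
        congr 1
        push_cast
        rw [hp_def]; ring
      calc ϑ * (T j) ^ (p + 1) = (Real.sqrt ϑ * (T j) ^ μ) ^ 2 := by
            rw [mul_pow, Real.sq_sqrt hϑ0.le, e2]
        _ ≤ (w i j) ^ 2 := hsq
    have hΔj : (Δ i j) ^ 2 = a j / (w i j) ^ 2 := by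
      rw [hΔ i j, div_pow, sq_abs]
    rw [hΔj]
    have hT1 : 0 < (T j) ^ (p + 1) := Real.rpow_pos_of_pos (hTpos j) _
    have h2 : a j / (w i j) ^ 2 ≤ a j / (ϑ * (T j) ^ (p + 1)) := by
      rcases eq_or_lt_of_le (ha j) with h | h
      · simp [← h]
      · exact div_le_div_of_nonneg_left (ha j) (by positivity) hw2
    refine h2.trans_eq ?_
    rw [Real.rpow_neg (hTpos j).le]
    field_simp
  calc ∑ j ∈ Finset.range (k + 1), (Δ i j) ^ 2
      ≤ ∑ j ∈ Finset.range (k + 1), (1 / ϑ) * (a j * (T j) ^ (-(p + 1))) :=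
        Finset.sum_le_sum fun j _ => hterm j
    _ = (1 / ϑ) * ∑ j ∈ Finset.range (k + 1), a j * (ς + ∑ ℓ ∈ Finset.range (j + 1), a ℓ) ^ (-(p + 1)) := by
        rw [Finset.mul_sum]
    _ ≤ (1 / ϑ) * (ς ^ (-p) / p) := by
        apply mul_le_mul_of_nonneg_left (series_bound a ha ς p hς hp k) (by positivity)
    _ = ς ^ (1 - 2 * μ) / (ϑ * (2 * μ - 1)) := by
        rw [hp_def, show -(2 * μ - 1) = 1 - 2 * μ by ring, one_div, ← mul_div_assoc,
          inv_mul_eq_div, div_div]
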